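/- Let A1,...,A6 be Hermitian involutions on a Hilbert space H and |ψ⟩ a unit vector satisfying A_iA_jA_k|ψ⟩ = |ψ⟩ for all permutations (i,j,k) of (1,2,3) and of (4,5,6), A1A4|ψ⟩ = A4A1|ψ⟩ = |ψ⟩, A2A5|ψ⟩ = A5A2|ψ⟩ = |ψ⟩, and A3A6|ψ⟩ = A6A3|ψ⟩ = -|ψ⟩. Then {A1,A5}|ψ⟩ = 0. -/

import Mathlib

/-- Maximal violation stabilizer conditions imply {A1,A5}|ψ⟩ = 0. -/
theorem stmt_3 {H : Type*} [NormedAddCommGroup H] [InnerProductSpace ℂ H] [CompleteSpace H]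
    (A1 A2 A3 A4 A5 A6 : H →L[ℂ] H)
    (hsa1 : IsSelfAdjoint A1) (hsa2 : IsSelfAdjoint A2) (hsa3 : IsSelfAdjoint A3)
    (hsa4 : IsSelfAdjoint A4) (hsa5 : IsSelfAdjoint A5) (hsa6 : IsSelfAdjoint A6)
    (hinv1 : A1 * A1 = 1) (hinv2 : A2 * A2 = 1) (hinv3 : A3 * A3 = 1)
    (hinv4 : A4 * A4 = 1) (hinv5 : A5 * A5 = 1) (hinv6 : A6 * A6 = 1)
    (ψ : H) (hψ : ‖ψ‖ = 1)
    (h123 : (A1 * A2 * A3) ψ = ψ) (h132 : (A1 * A3 * A2) ψ = ψ)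
    (h213 : (A2 * A1 * A3) ψ = ψ) (h231 : (A2 * A3 * A1) ψ = ψ)
    (h312 : (A3 * A1 * A2) ψ = ψ) (h321 : (A3 * A2 * A1) ψ = ψ)
    (h456 : (A4 * A5 * A6) ψ = ψ) (h465 : (A4 * A6 * A5) ψ = ψ)
    (h546 : (A5 * A4 * A6) ψ = ψ) (h564 : (A5 * A6 * A4) ψ = ψ)
    (h645 : (A6 * A4 * A5) ψ = ψ) (h654 : (A6 * A5 * A4) ψ = ψ)
    (h14 : (A1 * A4) ψ = ψ) (h41 : (A4 * A1) ψ = ψ)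
    (h25 : (A2 * A5) ψ = ψ) (h52 : (A5 * A2) ψ = ψ)
    (h36 : (A3 * A6) ψ = -ψ) (h63 : (A6 * A3) ψ = -ψ) :
    (A1 * A5 + A5 * A1) ψ = 0 := by
  have inv2 : ∀ x : H, A2 (A2 x) = x := fun x => by
    have := congrFun (congrArg DFunLike.coe hinv2) x
    simpa [ContinuousLinearMap.mul_apply] using this
  have inv3 : ∀ x : H, A3 (A3 x) = x := fun x => by
    have := congrFun (congrArg DFunLike.coe hinv3) x
    simpa [ContinuousLinearMap.mul_apply] using this
  have inv4 : ∀ x : H, A4 (A4 x) = x := fun x => by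
    have := congrFun (congrArg DFunLike.coe hinv4) x
    simpa [ContinuousLinearMap.mul_apply] using this
  have inv6 : ∀ x : H, A6 (A6 x) = x := fun x => by
    have := congrFun (congrArg DFunLike.coe hinv6) x
    simpa [ContinuousLinearMap.mul_apply] using this
  simp only [ContinuousLinearMap.mul_apply] at h25 h41 h213 h654 h36 ⊢
  -- A5 ψ = A2 ψ
  have e5 : A5 ψ = A2 ψ := by
    have h := congrArg A2 h25
    rwa [inv2] at h
  -- A1 ψ = A4 ψ
  have e1 : A1 ψ = A4 ψ := by
    have h := congrArg A4 h41
    rwa [inv4] at h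
  -- A1 (A2 ψ) = A3 ψ  (from h213: A2 (A1 (A3 ψ)) = ψ)
  have e12 : A1 (A2 ψ) = A3 ψ := by
    have h := congrArg (fun x => A1 (A2 x)) h213
    rw [inv2] at h
    have h' := congrArg A3 h
    rw [show A1 (A1 (A3 ψ)) = A3 ψ from by
      have := congrFun (congrArg DFunLike.coe hinv1) (A3 ψ)
      simpa [ContinuousLinearMap.mul_apply] using this] at h
    exact h.symm ▸ rfl
  -- A5 (A4 ψ) = A6 ψ  (from h654: A6 (A5 (A4 ψ)) = ψ)
  have e54 : A5 (A4 ψ) = A6 ψ := by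
    have h := congrArg A6 h654
    rwa [inv6] at h
  -- A6 ψ = - A3 ψ
  have e6 : A6 ψ = -A3 ψ := by
    have h := congrArg A3 h36
    rw [inv3] at h
    simpa using h
  rw [ContinuousLinearMap.add_apply, ContinuousLinearMap.mul_apply,
    ContinuousLinearMap.mul_apply, e5, e1, e12, e54, e6]
  abel
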